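/- Let α ∈ ℂ, x = |α|², and define u : ℕ → ℂ by u_n = e^{-x/2} α^n/√(n!) (the coherent state coefficients), and Ψ : ℕ × ℕ → ℂ by Ψ(n,m) = u_n·[m=0] + [n=0]·u_m (the unnormalized coherent NOON state). Then the Bell correlator E := (4|Ψ(0,0)|² − 2·Σ_{m}|Ψ(0,m)|² − 2·Σ_{n}|Ψ(n,0)|² + Σ_{(n,m)}|Ψ(n,m)|²) / (Σ_{(n,m)}|Ψ(n,m)|²) equals (3e^{-x} − 1)/(1+e^{-x}). -/

import Mathlib

open scoped BigOperators

/-- The reference-frame-independent Bell correlator `⟨M₀ᴬ M₀ᴮ⟩` of the coherent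
NOON state equals `N'(3e^{-x} − 1)` with `N' = 1/(1+e^{-x})`, `x = |α|²`. -/
theorem coherent_NOON_bell_correlator
    (α : ℂ) (x : ℝ) (hx : x = ‖α‖ ^ 2)
    (u : ℕ → ℂ)
    (hu : ∀ n : ℕ, u n = ((Real.exp (-x / 2) : ℝ) : ℂ) * α ^ n /
      ((Real.sqrt (Nat.factorial n) : ℝ) : ℂ))
    (Ψ : ℕ × ℕ → ℂ)
    (hΨ : ∀ n m : ℕ, Ψ (n, m) =
      u n * (if m = 0 then 1 else 0) + (if n = 0 then 1 else 0) * u m)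
    (E : ℝ)
    (hE : E = (4 * ‖Ψ (0, 0)‖ ^ 2
        - 2 * ∑' m : ℕ, ‖Ψ (0, m)‖ ^ 2
        - 2 * ∑' n : ℕ, ‖Ψ (n, 0)‖ ^ 2
        + ∑' p : ℕ × ℕ, ‖Ψ p‖ ^ 2) /
      ∑' p : ℕ × ℕ, ‖Ψ p‖ ^ 2) :
    E = (3 * Real.exp (-x) - 1) / (1 + Real.exp (-x)) := by
  set e := Real.exp (-x) with he
  have hx0 : 0 ≤ x := hx ▸ sq_nonneg _
  set w : ℕ → ℝ := fun n => e * (x ^ n / n.factorial) with hwdef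
  have hwnn : ∀ n, 0 ≤ w n := fun n => by
    apply mul_nonneg (Real.exp_pos _).le
    positivity
  -- |u n|^2 = w n
  have hw : ∀ n, ‖u n‖ ^ 2 = w n := by
    intro n
    have h1 : ‖u n‖
        = Real.exp (-x / 2) * ‖α‖ ^ n / Real.sqrt n.factorial := by
      rw [hu n, norm_div, norm_mul, Complex.norm_real, Complex.norm_real, norm_pow,
        Real.norm_eq_abs, Real.norm_eq_abs,
        abs_of_pos (Real.exp_pos _), abs_of_nonneg (Real.sqrt_nonneg _)]
    have h2 : (‖α‖ ^ n) ^ 2 = x ^ n := by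
      rw [← pow_mul, mul_comm, pow_mul, ← hx]
    have h3 : (Real.exp (-x / 2)) ^ 2 = e := by
      rw [sq, ← Real.exp_add, he]
      ring_nf
    rw [h1, div_pow, mul_pow, h2, h3, Real.sq_sqrt (Nat.cast_nonneg _), hwdef]
    ring
  -- summability and sum of w
  have hsw : Summable w := (Real.summable_pow_div_factorial x).mul_left e
  have hswsum : ∑' n, w n = 1 := by
    have hexp : Real.exp x = ∑' n : ℕ, x ^ n / n.factorial := by
      rw [Real.exp_eq_exp_ℝ, NormedSpace.exp_eq_tsum ℝ]
      exact tsum_congr fun n => by rw [smul_eq_mul, div_eq_inv_mul]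
    rw [hwdef, tsum_mul_left, ← hexp, he, ← Real.exp_add]
    simp
  have hw0 : w 0 = e := by simp [hwdef]
  have habs2 : ‖u 0 * (if (0:ℕ) = 0 then (1:ℂ) else 0)
      + (if (0:ℕ) = 0 then (1:ℂ) else 0) * u 0‖ ^ 2 = 4 * e := by
    have hq : (u 0 * (if (0:ℕ) = 0 then (1:ℂ) else 0)
        + (if (0:ℕ) = 0 then (1:ℂ) else 0) * u 0) = 2 * u 0 := by
      simp; ring
    rw [hq, norm_mul, mul_pow, hw 0, hw0, Complex.norm_two]
    norm_num
  -- row sum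
  have hrow : (∑' m : ℕ, ‖Ψ (0, m)‖ ^ 2) = 1 + 3 * e := by
    have hpt : ∀ m, ‖Ψ (0, m)‖ ^ 2 = w m + (if m = 0 then 3 * e else 0) := by
      intro m
      rw [hΨ 0 m]
      by_cases hm : m = 0
      · subst hm
        rw [habs2, hw0]
        simp; ring
      · simp [hm, hw m]
    rw [tsum_congr hpt, Summable.tsum_add hsw ((hasSum_ite_eq 0 (3*e)).summable), hswsum,
      tsum_ite_eq 0 (fun _ => 3*e)]
  have hcol : (∑' n : ℕ, ‖Ψ (n, 0)‖ ^ 2) = 1 + 3 * e := by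
    have hpt : ∀ n, ‖Ψ (n, 0)‖ ^ 2 = w n + (if n = 0 then 3 * e else 0) := by
      intro n
      rw [hΨ n 0]
      by_cases hn : n = 0
      · subst hn
        rw [habs2, hw0]
        simp; ring
      · simp [hn, hw n]
    rw [tsum_congr hpt, Summable.tsum_add hsw ((hasSum_ite_eq 0 (3*e)).summable), hswsum,
      tsum_ite_eq 0 (fun _ => 3*e)]
  -- center term
  have hcent : ‖Ψ (0, 0)‖ ^ 2 = 4 * e := by
    rw [hΨ 0 0, habs2]
  -- full sum: split into three pieces
  set A : ℕ × ℕ → ℝ := fun p => if p.2 = 0 then w p.1 else 0 with hA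
  set B : ℕ × ℕ → ℝ := fun p => if p.1 = 0 then w p.2 else 0 with hB
  set C : ℕ × ℕ → ℝ := fun p => if p = (0, 0) then 2 * e else 0 with hC
  have hsplit : ∀ p : ℕ × ℕ, ‖Ψ p‖ ^ 2 = A p + B p + C p := by
    rintro ⟨n, m⟩
    rw [hΨ n m]
    by_cases hn : n = 0 <;> by_cases hm : m = 0
    · subst hn; subst hm
      rw [habs2]
      simp only [hA, hB, hC]
      norm_num [hw0]
      ring
    · subst hn
      simp only [hA, hB, hC]
      simp [hm, hw m]
    · subst hm
      simp only [hA, hB, hC]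
      simp [hn, hw n]
    · simp only [hA, hB, hC]
      simp [hn, hm, Prod.ext_iff]
  have hArow : ∀ n : ℕ, (∑' m : ℕ, A (n, m)) = w n := fun n => tsum_ite_eq 0 (fun _ => w n)
  have hAnn : 0 ≤ A := by
    intro p
    simp only [Pi.zero_apply, hA]
    split
    · exact hwnn _
    · exact le_rfl
  have hsA : Summable A := by
    refine (summable_prod_of_nonneg hAnn).2 ⟨fun n => (hasSum_ite_eq 0 (w n)).summable, ?_⟩
    simpa [hArow] using hsw
  have htA : (∑' p : ℕ × ℕ, A p) = 1 := by
    rw [Summable.tsum_prod' hsA fun n => (hasSum_ite_eq 0 (w n)).summable]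
    simp only [hArow]
    exact hswsum
  have hBrowS : ∀ n : ℕ, Summable fun m => B (n, m) := by
    intro n
    by_cases hn : n = 0
    · subst hn; simpa [hB] using hsw
    · simp only [hB, if_neg hn]
      exact summable_zero
  have hBrow : ∀ n : ℕ, (∑' m : ℕ, B (n, m)) = if n = 0 then 1 else 0 := by
    intro n
    by_cases hn : n = 0
    · subst hn; simpa [hB] using hswsum
    · simp [hB, if_neg hn]
  have hBnn : 0 ≤ B := by
    intro p
    simp only [Pi.zero_apply, hB]
    split
    · exact hwnn _
    · exact le_rfl
  have hsB : Summable B := by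
    refine (summable_prod_of_nonneg hBnn).2 ⟨hBrowS, ?_⟩
    simp only [hBrow]
    exact (hasSum_ite_eq 0 (1:ℝ)).summable
  have htB : (∑' p : ℕ × ℕ, B p) = 1 := by
    rw [Summable.tsum_prod' hsB hBrowS]
    simp only [hBrow]
    exact tsum_ite_eq 0 (fun _ => (1:ℝ))
  have hsC : Summable C := (hasSum_ite_eq ((0,0) : ℕ × ℕ) (2*e)).summable
  have htC : (∑' p : ℕ × ℕ, C p) = 2 * e := tsum_ite_eq ((0,0) : ℕ × ℕ) (fun _ => 2*e)
  have htot : (∑' p : ℕ × ℕ, ‖Ψ p‖ ^ 2) = 2 + 2 * e := by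
    rw [tsum_congr hsplit, Summable.tsum_add (hsA.add hsB) hsC, Summable.tsum_add hsA hsB, htA, htB, htC]
    ring
  -- finish
  have hepos : 0 < e := Real.exp_pos _
  rw [hE, hrow, hcol, hcent, htot]
  rw [div_eq_div_iff (by linarith) (by linarith)]
  ring
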